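/- arXiv:math/0112059 — 3 statements merged into one kernel-verified Lean document; each statement's English description precedes it below -/
import Mathlib

section
/- Suppose additionally that a and d are invertible with inverses a⁻¹, d⁻¹ commuting appropriately (a·a⁻¹ = a⁻¹·a = 1, d·d⁻¹ = d⁻¹·d = 1). Define A' = a⁻¹ + a⁻¹βd⁻¹γa⁻¹, B' = −a⁻¹βd⁻¹, C' = −d⁻¹γa⁻¹, D' = d⁻¹ + d⁻¹γa⁻¹βd⁻¹. Then the matrix (A' B'; C' D') is a two-sided inverse of T = (a β; γ d), i.e. aA' + βC' = 1, aB' + βD' = 0, γA' + dC' = 0, γB' + dD' = 1, and the analogous left-inverse identities hold. -/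
private lemma aux_comm {K A : Type*} [Field K] [Ring A] [Algebra K A]
    {a ai x : A} {c : K}
    (h : a * x = c • (x * a)) (ha1 : a * ai = 1) (ha2 : ai * a = 1) :
    x * ai = c • (ai * x) := by
  calc x * ai = ai * a * x * ai := by rw [ha2, one_mul]
    _ = ai * (a * x) * ai := by rw [mul_assoc ai a x]
    _ = ai * (c • (x * a)) * ai := by rw [h]
    _ = c • (ai * x * (a * ai)) := by
        simp only [mul_smul_comm, smul_mul_assoc, mul_assoc]
    _ = c • (ai * x) := by rw [ha1, mul_one]

theorem gl_pq_antipode_inverse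
    (K : Type*) [Field K] (A : Type*) [Ring A] [Algebra K A]
    (p q : K) (hp : p ≠ 0) (hq : q ≠ 0)
    (a β γ d ai di : A)
    (h1 : a * β = q • (β * a)) (h2 : d * β = q • (β * d))
    (h3 : a * γ = p • (γ * a)) (h4 : d * γ = p • (γ * d))
    (h5 : β * γ = -((p * q⁻¹) • (γ * β))) (h6 : β ^ 2 = 0) (h7 : γ ^ 2 = 0)
    (h8 : a * d = d * a + (p - q⁻¹) • (γ * β))
    (ha1 : a * ai = 1) (ha2 : ai * a = 1)
    (hd1 : d * di = 1) (hd2 : di * d = 1) :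
    let A' := ai + ai * β * di * γ * ai
    let B' := -(ai * β * di)
    let C' := -(di * γ * ai)
    let D' := di + di * γ * ai * β * di
    a * A' + β * C' = 1 ∧ a * B' + β * D' = 0 ∧
    γ * A' + d * C' = 0 ∧ γ * B' + d * D' = 1 ∧
    A' * a + B' * γ = 1 ∧ A' * β + B' * d = 0 ∧
    C' * a + D' * γ = 0 ∧ C' * β + D' * d = 1 := by
  intro A' B' C' D'
  have hba : β * ai = q • (ai * β) := aux_comm h1 ha1 ha2
  have hbd : β * di = q • (di * β) := aux_comm h2 hd1 hd2
  have hga : γ * ai = p • (ai * γ) := aux_comm h3 ha1 ha2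
  have hgd : γ * di = p • (di * γ) := aux_comm h4 hd1 hd2
  have hba' : ∀ x, β * (ai * x) = q • (ai * (β * x)) := fun x => by
    rw [← mul_assoc, hba, smul_mul_assoc, mul_assoc]
  have hbd' : ∀ x, β * (di * x) = q • (di * (β * x)) := fun x => by
    rw [← mul_assoc, hbd, smul_mul_assoc, mul_assoc]
  have hga' : ∀ x, γ * (ai * x) = p • (ai * (γ * x)) := fun x => by
    rw [← mul_assoc, hga, smul_mul_assoc, mul_assoc]
  have hgd' : ∀ x, γ * (di * x) = p • (di * (γ * x)) := fun x => by
    rw [← mul_assoc, hgd, smul_mul_assoc, mul_assoc]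
  have h5' : ∀ x, β * (γ * x) = -((p * q⁻¹) • (γ * (β * x))) := fun x => by
    rw [← mul_assoc, h5, neg_mul, smul_mul_assoc, mul_assoc]
  have hbb : β * β = 0 := by rw [← sq, h6]
  have hgg : γ * γ = 0 := by rw [← sq, h7]
  have hbb' : ∀ x, β * (β * x) = 0 := fun x => by rw [← mul_assoc, hbb, zero_mul]
  have hgg' : ∀ x, γ * (γ * x) = 0 := fun x => by rw [← mul_assoc, hgg, zero_mul]
  have h1r : β * a = q⁻¹ • (a * β) := by
    rw [h1, smul_smul, inv_mul_cancel₀ hq, one_smul]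
  have h2r : β * d = q⁻¹ • (d * β) := by
    rw [h2, smul_smul, inv_mul_cancel₀ hq, one_smul]
  have h3r : γ * a = p⁻¹ • (a * γ) := by
    rw [h3, smul_smul, inv_mul_cancel₀ hp, one_smul]
  have h4r : γ * d = p⁻¹ • (d * γ) := by
    rw [h4, smul_smul, inv_mul_cancel₀ hp, one_smul]
  have h1r' : ∀ x, β * (a * x) = q⁻¹ • (a * (β * x)) := fun x => by
    rw [← mul_assoc, h1r, smul_mul_assoc, mul_assoc]
  have h2r' : ∀ x, β * (d * x) = q⁻¹ • (d * (β * x)) := fun x => by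
    rw [← mul_assoc, h2r, smul_mul_assoc, mul_assoc]
  have h3r' : ∀ x, γ * (a * x) = p⁻¹ • (a * (γ * x)) := fun x => by
    rw [← mul_assoc, h3r, smul_mul_assoc, mul_assoc]
  have h4r' : ∀ x, γ * (d * x) = p⁻¹ • (d * (γ * x)) := fun x => by
    rw [← mul_assoc, h4r, smul_mul_assoc, mul_assoc]
  have haa' : ∀ x, a * (ai * x) = x := fun x => by rw [← mul_assoc, ha1, one_mul]
  have haa'' : ∀ x, ai * (a * x) = x := fun x => by rw [← mul_assoc, ha2, one_mul]
  have hdd' : ∀ x, d * (di * x) = x := fun x => by rw [← mul_assoc, hd1, one_mul]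
  have hdd'' : ∀ x, di * (d * x) = x := fun x => by rw [← mul_assoc, hd2, one_mul]
  refine ⟨?_, ?_, ?_, ?_, ?_, ?_, ?_, ?_⟩ <;>
  · show _ = _
    simp only [A', B', C', D', mul_add, add_mul, mul_neg, neg_mul, mul_one, one_mul,
      mul_assoc, haa', haa'', hdd', hdd'', ha1, ha2, hd1, hd2,
      hba, hbd, hga, hgd, hba', hbd', hga', hgd', h5, h5',
      h1r, h2r, h3r, h4r, h1r', h2r', h3r', h4r',
      hbb, hgg, hbb', hgg', smul_mul_assoc, mul_smul_comm, smul_smul,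
      smul_zero, mul_zero, zero_mul, add_zero, zero_add, smul_neg, neg_neg, neg_zero,
      neg_add_rev]
    try module
    try (match_scalars <;> field_simp <;> ring)
end

section
/- With T invertible as above and A' = a⁻¹ + a⁻¹βd⁻¹γa⁻¹, the relation aA' = pq·A'a + (1 − pq)·1 holds. -/
theorem gl_pq_aA_relation
    (K : Type*) [Field K] (A : Type*) [Ring A] [Algebra K A]
    (p q : K) (hp : p ≠ 0) (hq : q ≠ 0)
    (a β γ d ai di : A)
    (h1 : a * β = q • (β * a)) (h2 : d * β = q • (β * d))
    (h3 : a * γ = p • (γ * a)) (h4 : d * γ = p • (γ * d))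
    (h5 : β * γ = -((p * q⁻¹) • (γ * β))) (h6 : β ^ 2 = 0) (h7 : γ ^ 2 = 0)
    (h8 : a * d = d * a + (p - q⁻¹) • (γ * β))
    (ha1 : a * ai = 1) (ha2 : ai * a = 1)
    (hd1 : d * di = 1) (hd2 : di * d = 1)
    (hi1 : ai * β = q⁻¹ • (β * ai)) (hi2 : ai * γ = p⁻¹ • (γ * ai))
    (hi3 : di * β = q⁻¹ • (β * di)) (hi4 : di * γ = p⁻¹ • (γ * di)) :
    a * (ai + ai * β * di * γ * ai) =
      (p * q) • ((ai + ai * β * di * γ * ai) * a) + (1 - p * q) • (1 : A) := by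
  have hγγ : γ * γ = 0 := by rw [← sq, h7]
  have haA : ∀ x : A, ai * (a * x) = x := fun x => by rw [← mul_assoc, ha2, one_mul]
  have hAa : ∀ x : A, a * (ai * x) = x := fun x => by rw [← mul_assoc, ha1, one_mul]
  have hDd : ∀ x : A, di * (d * x) = x := fun x => by rw [← mul_assoc, hd2, one_mul]
  have hiβ : ∀ x : A, ai * (β * x) = q⁻¹ • (β * (ai * x)) := fun x => by
    rw [← mul_assoc, hi1, smul_mul_assoc, mul_assoc]
  have hiγ : ∀ x : A, ai * (γ * x) = p⁻¹ • (γ * (ai * x)) := fun x => by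
    rw [← mul_assoc, hi2, smul_mul_assoc, mul_assoc]
  have hdγ : ∀ x : A, di * (γ * x) = p⁻¹ • (γ * (di * x)) := fun x => by
    rw [← mul_assoc, hi4, smul_mul_assoc, mul_assoc]
  -- commutator of d and ai
  have e1 : d * ai = ai * d + (p - q⁻¹) • (ai * (γ * (β * ai))) := by
    have := congrArg (fun x : A => ai * (x * ai)) h8
    simp only [add_mul, mul_add, smul_mul_assoc, mul_smul_comm, mul_assoc] at this
    rw [haA] at this
    rw [ha1, mul_one] at this
    exact this
  have e1' : ai * d = d * ai - (p - q⁻¹) • (ai * (γ * (β * ai))) := by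
    rw [e1, add_sub_cancel_right]
  -- commutator of di and ai
  have e2 : di * ai = ai * di - (p - q⁻¹) • (di * (ai * (γ * (β * (ai * di))))) := by
    calc di * ai = di * (ai * (d * di)) := by rw [hd1, mul_one]
      _ = di * ((ai * d) * di) := by rw [mul_assoc]
      _ = di * ((d * ai - (p - q⁻¹) • (ai * (γ * (β * ai)))) * di) := by rw [e1']
      _ = di * (d * (ai * di)) - (p - q⁻¹) • (di * (ai * (γ * (β * (ai * di))))) := by
          simp only [sub_mul, mul_sub, smul_mul_assoc, mul_smul_comm, mul_assoc]
      _ = ai * di - (p - q⁻¹) • (di * (ai * (γ * (β * (ai * di))))) := by rw [hDd]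
  -- key: β γ kills the commutator
  have key : β * (γ * (di * ai)) = β * (γ * (ai * di)) := by
    rw [e2]
    have hz : β * (γ * (di * (ai * (γ * (β * (ai * di)))))) = 0 := by
      rw [hiγ, mul_smul_comm, hdγ, smul_smul, mul_smul_comm, mul_smul_comm,
        ← mul_assoc γ γ, hγγ, zero_mul, mul_zero, smul_zero]
    simp only [mul_sub, mul_smul_comm, hz, smul_zero, sub_zero]
  -- main computation
  simp only [mul_add, add_mul, mul_assoc]
  rw [ha1, ha2, mul_one, hAa]
  rw [hdγ, mul_smul_comm, key]
  rw [hi4, mul_smul_comm, mul_smul_comm, hiβ, hiγ, mul_smul_comm, smul_smul, smul_smul]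
  simp only [smul_add, smul_smul]
  match_scalars <;> field_simp <;> ring
end

section
/- The matrix R̂ = ![![q,0,0,0], ![0, q−p⁻¹, 1, 0], ![0, qp⁻¹, 0, 0], ![0,0,0,−p⁻¹]] satisfies the braid (graded Yang–Baxter) equation (R̂⊗I)(I⊗R̂)(R̂⊗I) = (I⊗R̂)(R̂⊗I)(I⊗R̂) as 8×8 matrices, where I is the 2×2 identity and ⊗ is the Kronecker product. -/
open Matrix Kronecker

set_option maxHeartbeats 4000000 in
theorem Rhat_braid
    (K : Type*) [Field K] (p q : K) (hp : p ≠ 0) (hq : q ≠ 0) :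
    let R : Matrix (Fin 4) (Fin 4) K :=
      ![![q, 0, 0, 0], ![0, q - p⁻¹, 1, 0], ![0, q * p⁻¹, 0, 0], ![0, 0, 0, -p⁻¹]]
    let I2 : Matrix (Fin 2) (Fin 2) K := 1
    let R12 : Matrix (Fin 8) (Fin 8) K :=
      Matrix.reindex finProdFinEquiv finProdFinEquiv (R ⊗ₖ I2)
    let R23 : Matrix (Fin 8) (Fin 8) K :=
      Matrix.reindex finProdFinEquiv finProdFinEquiv (I2 ⊗ₖ R)
    R12 * R23 * R12 = R23 * R12 * R23 := by
  intro R I2 R12 R23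
  ext i j
  fin_cases i <;> fin_cases j <;>
    (simp only [R12, R23, R, I2, Matrix.reindex_apply, Matrix.mul_apply, Fin.sum_univ_succ,
      Matrix.submatrix_apply, finProdFinEquiv, Fin.divNat, Fin.modNat, Fin.sum_univ_zero,
      Matrix.kroneckerMap_apply, Matrix.one_apply, Equiv.coe_fn_symm_mk, Matrix.kroneckerMap,
      Matrix.of_apply]
     norm_num
     try field_simp
     try ring)
end
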